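/- Let V be a complex vector space, let P, Q : V → V be linear idempotents, and let W ∈ V satisfy P(W) = 0. Set W′ := (2P−1)(2Q−1)W and assume Q(W′) = 0. Then P(W′) = 2·PQ(W), Q(W) = 2·QP(W′), and for every n ≥ 1 one has (PQ)ⁿ(W) = 4^{1−n}·PQ(W) and (QP)ⁿ(W′) = 4^{1−n}·QP(W′). -/
import Mathlib

/-- If `P W = 0`, `W' = (2P-1)(2Q-1)W` and `Q W' = 0` for linear idempotents `P, Q` on a
complex vector space, then `P W' = 2 PQ W`, `Q W = 2 QP W'`, and for `n ≥ 1`,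
`(PQ)ⁿ W = 4^{1-n} PQ W` and `(QP)ⁿ W' = 4^{1-n} QP W'`. -/
theorem stmt_4 {V : Type*} [AddCommGroup V] [Module ℂ V]
    (P Q : Module.End ℂ V) (hP : P * P = P) (hQ : Q * Q = Q)
    (W W' : V) (hPW : P W = 0)
    (hW' : W' = ((2 • P - 1 : Module.End ℂ V)) (((2 • Q - 1 : Module.End ℂ V)) W))
    (hQW' : Q W' = 0) :
    P W' = (2 : ℂ) • P (Q W) ∧
    Q W = (2 : ℂ) • Q (P W') ∧
    ∀ n : ℕ, 1 ≤ n →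
      ((P * Q) ^ n) W = ((4 : ℂ) ^ (1 - (n : ℤ))) • P (Q W) ∧
      ((Q * P) ^ n) W' = ((4 : ℂ) ^ (1 - (n : ℤ))) • Q (P W') := by
  have hPa : ∀ v, P (P v) = P v := fun v => DFunLike.congr_fun hP v
  have hQa : ∀ v, Q (Q v) = Q v := fun v => DFunLike.congr_fun hQ v
  have hW'v : W' = (4:ℂ) • P (Q W) - (2:ℂ) • Q W + W := by
    rw [hW']
    simp only [LinearMap.sub_apply, LinearMap.smul_apply, Module.End.one_apply,
      map_sub, map_nsmul, hPW]
    module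
  -- key scaling identity
  have hkey : Q W = (4:ℂ) • Q (P (Q W)) := by
    have h := hQW'
    rw [hW'v] at h
    simp only [map_add, map_sub, map_smul, hQa] at h
    linear_combination (norm := module) -h
  -- P W' = 2 PQW
  have h1 : P W' = (2 : ℂ) • P (Q W) := by
    rw [hW'v]
    simp only [map_add, map_sub, map_smul, hPW, hPa]
    module
  -- Q (P W') = 2 QPQW, hence Q W = 2 Q (P W')
  have hQPW' : Q (P W') = (2:ℂ) • Q (P (Q W)) := by
    rw [h1, map_smul]
  have h2 : Q W = (2 : ℂ) • Q (P W') := by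
    rw [hQPW', smul_smul]
    norm_num
    exact hkey
  refine ⟨h1, h2, ?_⟩
  -- auxiliary: PQPQ W = 4⁻¹ • PQ W and QPQP W' = 4⁻¹ • QP W'
  have k1 : P (Q (P (Q W))) = (4:ℂ)⁻¹ • P (Q W) := by
    have := congrArg (fun v => (4:ℂ)⁻¹ • P v) hkey.symm
    simpa [map_smul, smul_smul] using this
  have k2 : Q (P (Q (P W'))) = (4:ℂ)⁻¹ • Q (P W') := by
    rw [h1]
    simp only [map_smul, k1, smul_smul]
    rw [mul_comm]
  intro n hn
  induction n with
  | zero => omega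
  | succ m ih =>
    rcases Nat.eq_zero_or_pos m with hm | hm
    · subst hm
      simp [Module.End.mul_apply]
    · obtain ⟨ihA, ihB⟩ := ih hm
      have e4 : (4:ℂ) ^ (1 - ((m+1 : ℕ) : ℤ)) = (4:ℂ) ^ (1 - (m:ℤ)) * (4:ℂ)⁻¹ := by
        push_cast
        rw [show (1 : ℤ) - ((m:ℤ)+1) = (1 - (m:ℤ)) - 1 by ring, zpow_sub_one₀ (by norm_num)]
      constructor
      · rw [pow_succ', Module.End.mul_apply, Module.End.mul_apply, ihA,
          map_smul, map_smul, k1, e4, smul_smul]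
      · rw [pow_succ', Module.End.mul_apply, Module.End.mul_apply, ihB,
          map_smul, map_smul, k2, e4, smul_smul]
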